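/- Let p₁, p₂ and k be positive integers, and let R₁, R₂ : ℝ → ℝ satisfy R₁(z) − e^{−z} = O(z^{p₁+1}) and R₂(z) − e^{−z} = O(z^{p₂+1}) as z → 0 (stability functions of Runge-Kutta schemes of orders p₁ and p₂). Then R₂(kz) − R₁(z)^k = O(z^{min(p₁,p₂)+1}) as z → 0. -/

import Mathlib

open Filter Topology Asymptotics

private lemma pow_isBigO_pow_nhds_zero {n m : ℕ} (h : n ≤ m) :
    (fun z : ℝ => z ^ m) =O[𝓝 0] fun z : ℝ => z ^ n := by
  rw [isBigO_iff]
  refine ⟨1, ?_⟩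
  filter_upwards [Metric.ball_mem_nhds (0 : ℝ) one_pos] with z hz
  rw [Metric.mem_ball, Real.dist_eq, sub_zero] at hz
  rw [one_mul]
  simp only [norm_pow, Real.norm_eq_abs]
  exact pow_le_pow_of_le_one (abs_nonneg z) hz.le h

/-- Scalar form of the paper's Lemma on `Ψ - Φ^k`: if `R₁` and `R₂` are stability
functions of Runge-Kutta schemes of orders `p₁` and `p₂` (i.e. they approximate
`e^{-z}` to orders `p₁+1` and `p₂+1` at `z = 0`), then for coarsening factor `k`,
`R₂(kz) - R₁(z)^k = O(z^{min(p₁,p₂)+1})` as `z → 0`. -/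
theorem stmt_0 (p₁ p₂ k : ℕ) (hp₁ : 0 < p₁) (hp₂ : 0 < p₂) (hk : 0 < k)
    (R₁ R₂ : ℝ → ℝ)
    (h₁ : (fun z : ℝ => R₁ z - Real.exp (-z)) =O[𝓝 0] fun z : ℝ => z ^ (p₁ + 1))
    (h₂ : (fun z : ℝ => R₂ z - Real.exp (-z)) =O[𝓝 0] fun z : ℝ => z ^ (p₂ + 1)) :
    (fun z : ℝ => R₂ ((k : ℝ) * z) - (R₁ z) ^ k) =O[𝓝 0]
      fun z : ℝ => z ^ (min p₁ p₂ + 1) := by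
  -- the map z ↦ k z tends to 0
  have htend : Tendsto (fun z : ℝ => (k : ℝ) * z) (𝓝 0) (𝓝 0) :=
    (continuous_const.mul continuous_id : Continuous fun z : ℝ => (k : ℝ) * z).tendsto' 0 0
      (by simp)
  -- part A : R₂(kz) - exp(-kz) = O(z^{p₂+1})
  have hA : (fun z : ℝ => R₂ ((k : ℝ) * z) - Real.exp (-((k : ℝ) * z)))
      =O[𝓝 0] fun z : ℝ => z ^ (p₂ + 1) := by
    have := h₂.comp_tendsto htend
    have h' : (fun z : ℝ => ((k : ℝ) * z) ^ (p₂ + 1)) =O[𝓝 0]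
        fun z : ℝ => z ^ (p₂ + 1) := by
      simp only [mul_pow]
      exact isBigO_const_mul_self _ _ _
    exact this.trans h'
  -- R₁ and exp are O(1) near 0
  have hexpO : (fun z : ℝ => Real.exp (-z)) =O[𝓝 0] (fun _ : ℝ => (1 : ℝ)) := by
    have : Tendsto (fun z : ℝ => Real.exp (-z)) (𝓝 0) (𝓝 (Real.exp 0)) :=
      (Real.continuous_exp.comp continuous_neg).tendsto' 0 _ (by simp)
    exact this.isBigO_one ℝ
  have hzpow1 : (fun z : ℝ => z ^ (p₁ + 1)) =O[𝓝 0] (fun _ : ℝ => (1 : ℝ)) := by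
    have : Tendsto (fun z : ℝ => z ^ (p₁ + 1)) (𝓝 0) (𝓝 ((0:ℝ) ^ (p₁ + 1))) :=
      (continuous_pow _).tendsto 0
    exact this.isBigO_one ℝ
  have hR₁O : R₁ =O[𝓝 0] (fun _ : ℝ => (1 : ℝ)) := by
    have : (fun z : ℝ => (R₁ z - Real.exp (-z)) + Real.exp (-z))
        =O[𝓝 0] (fun _ : ℝ => (1 : ℝ)) := by
      simpa using (h₁.trans hzpow1).add hexpO
    simpa using this
  -- the geometric-sum factor is O(1)
  have hS : (fun z : ℝ => ∑ i ∈ Finset.range k,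
      Real.exp (-z) ^ i * R₁ z ^ (k - 1 - i)) =O[𝓝 0] (fun _ : ℝ => (1 : ℝ)) := by
    apply Asymptotics.IsBigO.fun_sum
    intro i _
    have := (hexpO.pow i).mul (hR₁O.pow (k - 1 - i))
    simp only [one_pow, mul_one] at this
    exact this
  -- part B : exp(-z)^k - R₁(z)^k = O(z^{p₁+1})
  have hB : (fun z : ℝ => Real.exp (-z) ^ k - R₁ z ^ k)
      =O[𝓝 0] fun z : ℝ => z ^ (p₁ + 1) := by
    have key : ∀ z : ℝ, Real.exp (-z) ^ k - R₁ z ^ k =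
        (∑ i ∈ Finset.range k, Real.exp (-z) ^ i * R₁ z ^ (k - 1 - i)) *
          (Real.exp (-z) - R₁ z) := fun z => (geom_sum₂_mul _ _ k).symm
    simp only [key]
    have := hS.mul h₁.neg_left
    simpa [neg_sub] using this
  -- combine
  have hmin₁ : min p₁ p₂ + 1 ≤ p₁ + 1 := by omega
  have hmin₂ : min p₁ p₂ + 1 ≤ p₂ + 1 := by omega
  have hA' := hA.trans (pow_isBigO_pow_nhds_zero hmin₂)
  have hB' := hB.trans (pow_isBigO_pow_nhds_zero hmin₁)
  have heq : ∀ z : ℝ, R₂ ((k : ℝ) * z) - R₁ z ^ k =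
      (R₂ ((k : ℝ) * z) - Real.exp (-((k : ℝ) * z))) +
        (Real.exp (-z) ^ k - R₁ z ^ k) := by
    intro z
    have : Real.exp (-((k : ℝ) * z)) = Real.exp (-z) ^ k := by
      rw [← Real.exp_nat_mul]; ring_nf
    rw [this]; ring
  simp only [heq]
  exact hA'.add hB'
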